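/- Let k be a field with char k = 2. The periplectic Brauer algebra A₂ over k is isomorphic as a k-algebra to k[x, y]/(x², xy, y²), the quotient of the polynomial ring in two commuting variables x, y over k by the ideal generated by x², xy and y². -/

import Mathlib

namespace PeriplecticPaper

/-- The two generators `s` and `ε` of the periplectic Brauer algebra `A₂`. -/
inductive PBGen : Type
  | s
  | e

open FreeAlgebra

/-- The defining relations of the periplectic Brauer algebra `A₂`:
`s² = 1`, `ε² = 0`, `s·ε = ε` and `ε·s = -ε`.  Taking the ring quotient by this
relation is the quotient of the free algebra on `s, ε` by the two-sided ideal
generated by `s² - 1`, `ε²`, `s·ε - ε` and `ε·s + ε`. -/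
inductive A2Rel (k : Type) [Field k] :
    FreeAlgebra k PBGen → FreeAlgebra k PBGen → Prop
  | ss : A2Rel k (ι k PBGen.s * ι k PBGen.s) 1
  | ee : A2Rel k (ι k PBGen.e * ι k PBGen.e) 0
  | se : A2Rel k (ι k PBGen.s * ι k PBGen.e) (ι k PBGen.e)
  | es : A2Rel k (ι k PBGen.e * ι k PBGen.s) (-(ι k PBGen.e))

/-- The periplectic Brauer algebra `A₂` over the field `k`:  the quotient of the free
associative unital `k`-algebra on generators `s, ε` by the two-sided ideal generated by
`s² - 1`, `ε²`, `s·ε - ε` and `ε·s + ε`. -/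
abbrev A2 (k : Type) [Field k] : Type := RingQuot (A2Rel k)

/-- The image in `A₂` of the generator `s`. -/
noncomputable def sBar (k : Type) [Field k] : A2 k :=
  RingQuot.mkAlgHom k (A2Rel k) (ι k PBGen.s)

/-- The image in `A₂` of the generator `ε`. -/
noncomputable def eBar (k : Type) [Field k] : A2 k :=
  RingQuot.mkAlgHom k (A2Rel k) (ι k PBGen.e)

open MvPolynomial in
set_option maxHeartbeats 2000000 in
/-- If `char k = 2`, the periplectic Brauer algebra `A₂` over `k` is isomorphic as a
`k`-algebra to `k[x, y]/(x², x·y, y²)`. -/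
theorem statement8 (k : Type) [Field k] [CharP k 2] :
    Nonempty (A2 k ≃ₐ[k]
      (MvPolynomial (Fin 2) k ⧸
        Ideal.span {(X 0 : MvPolynomial (Fin 2) k) ^ 2, X 0 * X 1, X 1 ^ 2})) := by
  classical
  set I : Ideal (MvPolynomial (Fin 2) k) :=
    Ideal.span {(X 0 : MvPolynomial (Fin 2) k) ^ 2, X 0 * X 1, X 1 ^ 2} with hI
  -- elements of the quotient
  set a : MvPolynomial (Fin 2) k ⧸ I := Ideal.Quotient.mk I (X 0) with ha_def
  set b : MvPolynomial (Fin 2) k ⧸ I := Ideal.Quotient.mk I (X 1) with hb_def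
  have haa : a * a = 0 := by
    rw [ha_def, ← map_mul, Ideal.Quotient.eq_zero_iff_mem]
    exact Ideal.subset_span (by simp [sq])
  have hab : a * b = 0 := by
    rw [ha_def, hb_def, ← map_mul, Ideal.Quotient.eq_zero_iff_mem]
    exact Ideal.subset_span (by simp)
  have hbb : b * b = 0 := by
    rw [hb_def, ← map_mul, Ideal.Quotient.eq_zero_iff_mem]
    exact Ideal.subset_span (by simp [sq])
  have h2k : (2 : k) = 0 := by exact_mod_cast CharP.cast_eq_zero k 2
  have h2Q : (2 : MvPolynomial (Fin 2) k ⧸ I) = 0 := by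
    rw [← map_ofNat (algebraMap k (MvPolynomial (Fin 2) k ⧸ I)) 2, h2k, map_zero]
  have h2A : (2 : A2 k) = 0 := by
    rw [← map_ofNat (algebraMap k (A2 k)) 2, h2k, map_zero]
  -- the forward map
  set F : FreeAlgebra k PBGen →ₐ[k] MvPolynomial (Fin 2) k ⧸ I :=
    FreeAlgebra.lift k (fun g => match g with | PBGen.s => a + 1 | PBGen.e => b) with hF_def
  have hFs : F (ι k PBGen.s) = a + 1 := by rw [hF_def, FreeAlgebra.lift_ι_apply]
  have hFe : F (ι k PBGen.e) = b := by rw [hF_def, FreeAlgebra.lift_ι_apply]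
  have hF : ∀ ⦃x y⦄, A2Rel k x y → F x = F y := by
    intro x y h
    cases h <;>
      simp only [map_mul, map_one, map_zero, map_neg, hFs, hFe]
    · linear_combination haa + a * h2Q
    · exact hbb
    · linear_combination hab
    · linear_combination hab + b * h2Q
  set f : A2 k →ₐ[k] MvPolynomial (Fin 2) k ⧸ I :=
    RingQuot.liftAlgHom k ⟨F, hF⟩ with hf_def
  have hfs : f (sBar k) = a + 1 := by
    rw [hf_def, sBar, RingQuot.liftAlgHom_mkAlgHom_apply, hFs]
  have hfe : f (eBar k) = b := by
    rw [hf_def, eBar, RingQuot.liftAlgHom_mkAlgHom_apply, hFe]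
  -- relations in A2
  have hss : sBar k * sBar k = 1 := by
    have h := RingQuot.mkAlgHom_rel k (A2Rel.ss (k := k))
    rw [map_mul, map_one] at h
    exact h
  have hee : eBar k * eBar k = 0 := by
    have h := RingQuot.mkAlgHom_rel k (A2Rel.ee (k := k))
    rw [map_mul, map_zero] at h
    exact h
  have hse : sBar k * eBar k = eBar k := by
    have h := RingQuot.mkAlgHom_rel k (A2Rel.se (k := k))
    rw [map_mul] at h
    exact h
  have hes : eBar k * sBar k = eBar k := by
    have h := RingQuot.mkAlgHom_rel k (A2Rel.es (k := k))
    rw [map_mul, map_neg] at h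
    unfold eBar sBar
    rw [h]
    have h0 : RingQuot.mkAlgHom k (A2Rel k) (ι k PBGen.e) +
        RingQuot.mkAlgHom k (A2Rel k) (ι k PBGen.e) = 0 := by
      rw [← two_mul, h2A, zero_mul]
    exact neg_eq_of_add_eq_zero_left h0
  -- A2 k is commutative in characteristic 2
  have htop : Algebra.adjoin k ({sBar k, eBar k} : Set (A2 k)) = ⊤ := by
    rw [eq_top_iff]
    intro x _
    obtain ⟨p, rfl⟩ := RingQuot.mkAlgHom_surjective k (A2Rel k) x
    have hp : p ∈ Algebra.adjoin k (Set.range (ι k : PBGen → FreeAlgebra k PBGen)) := by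
      rw [FreeAlgebra.adjoin_range_ι]; trivial
    have himg : RingQuot.mkAlgHom k (A2Rel k) p ∈
        (Algebra.adjoin k (Set.range (ι k : PBGen → FreeAlgebra k PBGen))).map
          (RingQuot.mkAlgHom k (A2Rel k)) := ⟨p, hp, rfl⟩
    rw [← Algebra.adjoin_image] at himg
    refine Algebra.adjoin_mono ?_ himg
    rintro y ⟨z, ⟨w, rfl⟩, rfl⟩
    cases w
    · exact Or.inl rfl
    · exact Or.inr rfl
  have hgencomm : ∀ c ∈ ({sBar k, eBar k} : Set (A2 k)),
      ∀ d ∈ ({sBar k, eBar k} : Set (A2 k)), Commute c d := by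
    rintro c (rfl | rfl) d (rfl | rfl)
    · exact Commute.refl _
    · show _ * _ = _ * _; rw [hse, hes]
    · show _ * _ = _ * _; rw [hse, hes]
    · exact Commute.refl _
  have hcomm : ∀ x y : A2 k, x * y = y * x := by
    intro x y
    have hx : x ∈ Algebra.adjoin k ({sBar k, eBar k} : Set (A2 k)) := htop ▸ trivial
    have hy : y ∈ Algebra.adjoin k ({sBar k, eBar k} : Set (A2 k)) := htop ▸ trivial
    refine Algebra.commute_of_mem_adjoin_of_forall_mem_commute hy ?_
    intro c hc
    exact (Algebra.commute_of_mem_adjoin_of_forall_mem_commute hx (hgencomm c hc)).symm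
  letI : CommRing (A2 k) := { (inferInstance : Ring (A2 k)) with mul_comm := hcomm }
  -- the backward map
  set G : MvPolynomial (Fin 2) k →ₐ[k] A2 k :=
    MvPolynomial.aeval ![sBar k + 1, eBar k] with hG_def
  have hG0 : G (X 0) = sBar k + 1 := by simp [hG_def]
  have hG1 : G (X 1) = eBar k := by simp [hG_def]
  have key1 : (sBar k + 1) * (sBar k + 1) = 0 := by
    have e1 : (sBar k + 1) * (sBar k + 1) = sBar k * sBar k + 2 * sBar k + 1 := by
      noncomm_ring
    rw [e1, hss, h2A, zero_mul, add_zero, one_add_one_eq_two, h2A]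
  have key2 : (sBar k + 1) * eBar k = 0 := by
    rw [add_mul, one_mul, hse, ← two_mul, h2A, zero_mul]
  have hGI : ∀ p ∈ I, G p = 0 := by
    intro p hp
    have hle : I ≤ RingHom.ker (G : MvPolynomial (Fin 2) k →+* A2 k) := by
      rw [hI, Ideal.span_le]
      intro p hp
      simp only [Set.mem_insert_iff, Set.mem_singleton_iff] at hp
      rcases hp with rfl | rfl | rfl
      · show G _ = 0
        rw [sq, map_mul, hG0, key1]
      · show G _ = 0
        rw [map_mul, hG0, hG1, key2]
      · show G _ = 0
        rw [sq, map_mul, hG1, hee]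
    exact hle hp
  set g : (MvPolynomial (Fin 2) k ⧸ I) →ₐ[k] A2 k := Ideal.Quotient.liftₐ I G hGI with hg_def
  have hga : g a = sBar k + 1 := by
    rw [hg_def, ha_def, ← hG0]
    rfl
  have hgb : g b = eBar k := by
    rw [hg_def, hb_def, ← hG1]
    rfl
  -- the two compositions
  have comp1 : f.comp g = AlgHom.id k (MvPolynomial (Fin 2) k ⧸ I) := by
    apply Ideal.Quotient.algHom_ext
    apply MvPolynomial.algHom_ext
    intro i
    fin_cases i <;>
      simp only [AlgHom.comp_apply, Ideal.Quotient.mkₐ_eq_mk, AlgHom.id_apply,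
        Fin.zero_eta, Fin.mk_one]
    · show f (g a) = a
      rw [hga, map_add, hfs, map_one]
      linear_combination h2Q
    · show f (g b) = b
      rw [hgb, hfe]
  have comp2 : g.comp f = AlgHom.id k (A2 k) := by
    apply RingQuot.ringQuot_ext' k
    apply FreeAlgebra.hom_ext
    funext x
    cases x
    · show g (f (sBar k)) = sBar k
      rw [hfs, map_add, hga, map_one, add_assoc, one_add_one_eq_two, h2A, add_zero]
    · show g (f (eBar k)) = eBar k
      rw [hfe, hgb]
  exact ⟨AlgEquiv.ofAlgHom f g comp1 comp2⟩

end PeriplecticPaper
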